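/- Suppose on V' (α ≠ 0, β ≠ 0, φl = lφ, ∇_ξ l = μξ on ker(η) or span{ξ}) we have γ = 0. Then κ₁ = −4α, φUβ = −c²/(16α²) + cβ²/(4α²) − 3β², and φUα = −3αβ + 3βc/(4α). -/

import Mathlib

/-- On V' with γ = 0, equations (2.20), (2.23), (2.18) together
with the chain rule φU(γ/α − c/(4α)) = (c/(4α²))·φUα (valid since γ = 0) give
κ₁ = −4α, φUβ = −c²/(16α²) + cβ²/(4α²) − 3β², and φUα = −3αβ + 3βc/(4α).
Here wα, wβ, wf denote φUα, φUβ, φU(γ/α − c/(4α)). -/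
theorem stmt_10 (c α β γ κ₁ wα wβ wf : ℝ)
    (hc : c ≠ 0) (hα : α ≠ 0) (hβ : β ≠ 0)
    (hγ : γ = 0)
    (h20 : wα + 3*β*(γ/α - c/(4*α)) - κ₁*β - α*β = 0)
    (h23 : wf = (3*β/α) * ((γ/α - c/(4*α))^2 - c/4))
    (h18 : wβ + (γ/α - c/(4*α)) * (γ/α - c/(4*α) + β^2/α) - κ₁ * β^2/α - β^2 - γ = 0)
    (hLeib : wf = (c/(4*α^2)) * wα) :
    κ₁ = -4*α ∧
    wβ = -(c^2/(16*α^2)) + c*β^2/(4*α^2) - 3*β^2 ∧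
    wα = -3*α*β + 3*β*c/(4*α) := by
  subst hγ
  field_simp at h20 h23 h18 hLeib
  have key : c * (wα * (16*α)) = c * (12*β*c - 48*α^2*β) := by
    linear_combination 4*h23 - 16*α*hLeib
  have h1 : wα * (16*α) = 12*β*c - 48*α^2*β := mul_left_cancel₀ hc key
  have hwα : wα = -3*α*β + 3*β*c/(4*α) := by
    field_simp
    linarith [h1]
  have hβα : β * (4*α) ≠ 0 := mul_ne_zero hβ (by simpa using hα)
  have key2 : (β*(4*α)) * κ₁ = (β*(4*α)) * (-4*α) := by
    linear_combination (1/4)*h1 - h20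
  have hκ : κ₁ = -4*α := mul_left_cancel₀ hβα key2
  refine ⟨hκ, ?_, hwα⟩
  subst hκ
  field_simp at h18 ⊢
  nlinarith [h18, sq_nonneg α]
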